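/- Let m be a natural number, δ > 0 a real, and π_j ∈ (0,1) for each j : Fin m. Define the Bernoulli product mass π(a) := ∏_{j} (π_j if a_j = true, else 1 − π_j) for a : Fin m → Bool, s(a) := card{j : a_j = true}, and the CPS weight H_δ(a) := δ^{s(a)}·π(a) / Σ_{a'} δ^{s(a')}·π(a'). Then for every a : Fin m → Bool, H_δ(a) = ∏_{j} (π_j^δ if a_j = true, else 1 − π_j^δ), where π_j^δ := δπ_j/(1 − π_j + δπ_j). That is, under within-cluster independence of treatment assignments, the cluster-level incremental propensity score policy coincides with the individual-level incremental propensity score policy. -/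

import Mathlib

open Finset

theorem cps_eq_ips_under_independence (m : ℕ) (δ : ℝ) (hδ : 0 < δ) (π : Fin m → ℝ)
    (hπ : ∀ j, 0 < π j ∧ π j < 1) (a : Fin m → Bool) :
    (δ ^ (univ.filter (fun j => a j = true)).card *
        ∏ j : Fin m, (if a j = true then π j else 1 - π j)) /
      (∑ a' : Fin m → Bool,
        δ ^ (univ.filter (fun j => a' j = true)).card *
          ∏ j : Fin m, (if a' j = true then π j else 1 - π j))
      = ∏ j : Fin m,
          (if a j = true then δ * π j / (1 - π j + δ * π j)
            else 1 - δ * π j / (1 - π j + δ * π j)) := by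
  have hpos : ∀ j, 0 < 1 - π j + δ * π j := fun j => by
    have h := hπ j; nlinarith [mul_pos hδ h.1]
  have key : ∀ b : Fin m → Bool,
      δ ^ (univ.filter (fun j => b j = true)).card *
        ∏ j : Fin m, (if b j = true then π j else 1 - π j)
      = ∏ j : Fin m, (if b j = true then δ * π j else 1 - π j) := by
    intro b
    rw [show (∏ j : Fin m, (if b j = true then δ * π j else 1 - π j))
        = ∏ j : Fin m, (if b j = true then δ else 1) * (if b j = true then π j else 1 - π j)
      from Finset.prod_congr rfl (fun j _ => by by_cases h : b j = true <;> simp [h]),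
      Finset.prod_mul_distrib]
    congr 1
    simp [Finset.prod_ite, Finset.prod_const]
  rw [key, Finset.sum_congr rfl fun b _ => key b, ← Fintype.prod_sum
    (fun j (c : Bool) => if c = true then δ * π j else 1 - π j)]
  rw [← Finset.prod_div_distrib]
  refine Finset.prod_congr rfl fun j _ => ?_
  have hne := (hpos j).ne'
  rcases Bool.eq_false_or_eq_true (a j) with h | h <;>
    simp only [h, Fintype.sum_bool, if_true, if_false, Bool.false_eq_true]
  · rw [show δ * π j + (1 - π j) = 1 - π j + δ * π j by ring]
  · rw [eq_sub_iff_add_eq, show δ * π j + (1 - π j) = 1 - π j + δ * π j by ring,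
      ← add_div, div_eq_one_iff_eq hne]
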